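/- arXiv:2312.09003 — 5 statements merged into one kernel-verified Lean document; each statement's English description precedes it below -/
import Mathlib

section
/- Let p be a prime and let n ≥ l ≥ 0 be integers. Let σ = [[a, b], [L, d]] be a matrix in SL₂(ℤ) and suppose that p^l divides L. Let α ∈ ℤ_p^× satisfy α ≡ 1 (mod p^{n−l} ℤ_p). Then, viewing σ as a matrix over ℚ_p, the conjugate σ · diag(α, 1) · σ⁻¹ equals [[a d α − b L, a b (1 − α)], [L d (α − 1), a d − b L α]]; all four of its entries lie in ℤ_p, its lower-left entry lies in p^n ℤ_p, and its determinant equals α, a unit of ℤ_p. In particular, σ · diag(α, 1) · σ⁻¹ belongs to K_p(p^n) := {g ∈ GL₂(ℤ_p) : the lower-left entry of g lies in p^n ℤ_p}. -/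
/-- Let `p` be a prime, `n ≥ l ≥ 0` integers,
`σ = [[a, b], [L, d]] ∈ SL₂(ℤ)` with `p^l ∣ L`, and let `α ∈ ℤ_p^×` satisfy
`α ≡ 1 (mod p^(n-l) ℤ_p)`.  Viewing `σ` as a matrix over `ℚ_p`, the conjugate
`σ · diag(α,1) · σ⁻¹` equals `[[a d α − b L, a b (1 − α)], [L d (α − 1), a d − b L α]]`;
all of its entries lie in `ℤ_p`, its lower-left entry lies in `p^n ℤ_p`, and its
determinant equals `α`, a unit of `ℤ_p`.  In particular it belongs to
`K_p(p^n) = {g ∈ GL₂(ℤ_p) : g 1 0 ∈ p^n ℤ_p}`. -/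
theorem fourier_coeff_cusp_local_invariance
    (p : ℕ) [Fact p.Prime] (n l : ℕ) (hln : l ≤ n)
    (a b L d : ℤ) (hσ : a * d - b * L = 1) (hL : (p : ℤ) ^ l ∣ L)
    (α : ℤ_[p]ˣ)
    (hα : ((α : ℤ_[p]) - 1) ∈ Ideal.span {(p : ℤ_[p]) ^ (n - l)}) :
    let σ : Matrix (Fin 2) (Fin 2) ℚ_[p] :=
      !![(a : ℚ_[p]), (b : ℚ_[p]); (L : ℚ_[p]), (d : ℚ_[p])]
    let A : ℚ_[p] := ((α : ℤ_[p]) : ℚ_[p])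
    let M : Matrix (Fin 2) (Fin 2) ℚ_[p] :=
      !![(a : ℚ_[p]) * d * A - b * L, (a : ℚ_[p]) * b * (1 - A);
         (L : ℚ_[p]) * d * (A - 1), (a : ℚ_[p]) * d - b * L * A]
    σ * !![A, 0; 0, 1] * σ⁻¹ = M ∧
    (∀ i j : Fin 2, ‖M i j‖ ≤ 1) ∧
    ‖M 1 0‖ ≤ (p : ℝ) ^ (-(n : ℤ)) ∧
    M.det = A ∧ IsUnit (α : ℤ_[p]) ∧
    (∃ G : Matrix (Fin 2) (Fin 2) ℤ_[p],
      IsUnit G.det ∧ G 1 0 ∈ Ideal.span {(p : ℤ_[p]) ^ n} ∧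
      G.map (fun y : ℤ_[p] => (y : ℚ_[p])) = M) := by
  intro σ A M
  -- basic facts
  have hσQ : (a : ℚ_[p]) * d - b * L = 1 := by
    have := congrArg (fun z : ℤ => (z : ℚ_[p])) hσ
    push_cast at this
    exact this
  have hσZ : (a : ℤ_[p]) * d - b * L = 1 := by
    have := congrArg (fun z : ℤ => (z : ℤ_[p])) hσ
    push_cast at this
    exact this
  -- the inverse of σ
  have hinv : σ⁻¹ = !![(d : ℚ_[p]), -b; -L, a] := by
    apply Matrix.inv_eq_right_inv
    ext i j
    fin_cases i <;> fin_cases j <;>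
      simp [σ, Matrix.mul_apply, Fin.sum_univ_two] <;>
      first
        | linear_combination hσQ
        | ring
  -- obtain the divisibility data
  obtain ⟨m, hm⟩ := hL
  obtain ⟨c, hc⟩ := Ideal.mem_span_singleton.mp hα
  -- the integral matrix G
  set αz : ℤ_[p] := (α : ℤ_[p]) with hαz
  set G : Matrix (Fin 2) (Fin 2) ℤ_[p] :=
    !![(a : ℤ_[p]) * d * αz - b * L, (a : ℤ_[p]) * b * (1 - αz);
       (L : ℤ_[p]) * d * (αz - 1), (a : ℤ_[p]) * d - b * L * αz] with hG
  have hGmap : G.map (fun y : ℤ_[p] => (y : ℚ_[p])) = M := by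
    ext i j
    fin_cases i <;> fin_cases j <;>
      simp [G, M, A, αz, Matrix.map_apply] <;> push_cast <;> ring
  have hGdet : G.det = αz := by
    rw [hG, Matrix.det_fin_two_of]
    linear_combination αz * ((a:ℤ_[p])*d - b*L + 1) * hσZ
  have hG10 : G 1 0 ∈ Ideal.span {(p : ℤ_[p]) ^ n} := by
    rw [Ideal.mem_span_singleton]
    have hmz : (L : ℤ_[p]) = (p : ℤ_[p]) ^ l * m := by
      have := congrArg (fun z : ℤ => (z : ℤ_[p])) hm
      push_cast at this
      simpa using this
    have e : G 1 0 = (L : ℤ_[p]) * d * (αz - 1) := by simp [hG]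
    have : G 1 0 = (p : ℤ_[p]) ^ n * ((m : ℤ_[p]) * d * c) := by
      have hpn : (p : ℤ_[p]) ^ l * (p : ℤ_[p]) ^ (n - l) = (p : ℤ_[p]) ^ n := by
        rw [← pow_add, Nat.add_sub_cancel' hln]
      rw [e, hmz, hc]
      linear_combination ((m : ℤ_[p]) * d * c) * hpn
    exact this ▸ Dvd.intro _ rfl
  refine ⟨?_, ?_, ?_, ?_, α.isUnit, G, ?_, hG10, hGmap⟩
  · rw [hinv]
    ext i j
    fin_cases i <;> fin_cases j <;>
      simp [σ, M, Matrix.mul_apply, Fin.sum_univ_two] <;> ring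
  · intro i j
    have : M i j = ((G i j : ℤ_[p]) : ℚ_[p]) := by rw [← hGmap]; rfl
    rw [this, PadicInt.padic_norm_e_of_padicInt]
    exact (G i j).2
  · obtain ⟨c', hc'⟩ := Ideal.mem_span_singleton.mp hG10
    have : M 1 0 = ((G 1 0 : ℤ_[p]) : ℚ_[p]) := by rw [← hGmap]; rfl
    rw [this, PadicInt.padic_norm_e_of_padicInt, hc', norm_mul]
    calc ‖(p : ℤ_[p]) ^ n‖ * ‖c'‖ ≤ ‖(p : ℤ_[p]) ^ n‖ * 1 := by
          exact mul_le_mul_of_nonneg_left c'.2 (norm_nonneg _)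
      _ = (p : ℝ) ^ (-(n : ℤ)) := by
          rw [mul_one, PadicInt.norm_p_pow]
  · have : M.det = ((G.det : ℤ_[p]) : ℚ_[p]) := by
      rw [← hGmap]
      simp [Matrix.det_fin_two, Matrix.map_apply]
    rw [this, hGdet]
  · rw [hGdet]; exact α.isUnit
end

section
/- Let O be a discrete valuation ring with fraction field K and uniformizer π (so the maximal ideal of O is πO). Let A = [[a', b'], [c', d']] be a 2×2 matrix over O whose determinant ε := a'd' − b'c' is a unit of O, let n ≥ 0 be an integer, and let x ∈ K. Then the conjugate A · [[1, x], [0, 1]] · A⁻¹, which equals the identity matrix plus x·ε⁻¹·[[−a'c', (a')²], [−(c')², a'c']], has all four entries in O and its lower-left entry in π^n O if and only if (a')² · x ∈ O and (c')² · x ∈ π^n O. -/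
private lemma sq_mem_aux (O K : Type*) [CommRing O] [IsDomain O] [IsDiscreteValuationRing O]
    [Field K] [Algebra O K] [IsFractionRing O K] (y : K)
    (h : ∃ z : O, algebraMap O K z = y ^ 2) : ∃ z : O, algebraMap O K z = y := by
  rw [← IsIntegrallyClosed.isIntegral_iff]
  obtain ⟨z, hz⟩ := h
  exact ⟨Polynomial.X ^ 2 - Polynomial.C z,
    Polynomial.monic_X_pow_sub_C z two_ne_zero, by simp [hz]⟩

/-- Let `O` be a DVR with fraction field `K` and uniformizer `π`.
Let `A = [[a', b'], [c', d']]` be a matrix over `O` with unit determinant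
`ε = a'd' − b'c'`, let `n ≥ 0` and `x ∈ K`.  Then
`A · [[1, x], [0, 1]] · A⁻¹ = 1 + x·ε⁻¹·[[−a'c', a'²], [−c'², a'c']]`,
and this conjugate has all entries in `O` with lower-left entry in `π^n O`
if and only if `a'² x ∈ O` and `c'² x ∈ π^n O`. -/
theorem unipotent_conjugate_integrality_criterion
    (O K : Type*) [CommRing O] [IsDomain O] [IsDiscreteValuationRing O]
    [Field K] [Algebra O K] [IsFractionRing O K]
    (π : O) (hπ : Irreducible π)
    (a' b' c' d' : O) (hε : IsUnit (a' * d' - b' * c'))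
    (n : ℕ) (x : K) :
    let f : O →+* K := algebraMap O K
    let A : Matrix (Fin 2) (Fin 2) K := !![f a', f b'; f c', f d']
    let M : Matrix (Fin 2) (Fin 2) K := A * !![1, x; 0, 1] * A⁻¹
    (M = 1 + (x * (f (a' * d' - b' * c'))⁻¹) •
        !![-(f a' * f c'), (f a') ^ 2; -((f c') ^ 2), f a' * f c']) ∧
    (((∀ i j : Fin 2, ∃ y : O, f y = M i j) ∧ (∃ y : O, f (π ^ n * y) = M 1 0))
      ↔ ((∃ y : O, f y = (f a') ^ 2 * x) ∧ (∃ y : O, f (π ^ n * y) = (f c') ^ 2 * x))) := by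
  intro f A M
  set e : O := a' * d' - b' * c' with he
  clear_value e
  obtain ⟨u', hu'⟩ := hε.exists_right_inv
  have hfe : f e * f u' = 1 := by rw [← map_mul, hu', map_one]
  have hne : f e ≠ 0 := left_ne_zero_of_mul_eq_one hfe
  have hinv : (f e)⁻¹ = f u' := inv_eq_of_mul_eq_one_right hfe
  have hdet : A.det = f e := by
    simp [A, Matrix.det_fin_two_of, he, map_sub, map_mul]
  have hAinv : A⁻¹ = (f e)⁻¹ • !![f d', -f b'; -f c', f a'] := by
    rw [Matrix.inv_def, hdet, Ring.inverse_eq_inv']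
    congr 1
    simp [A, Matrix.adjugate_fin_two_of]
  have hfesub : f e = f a' * f d' - f b' * f c' := by rw [he, map_sub, map_mul, map_mul]
  have hM : M = 1 + (x * (f e)⁻¹) •
      !![-(f a' * f c'), (f a') ^ 2; -((f c') ^ 2), f a' * f c'] := by
    show A * !![1, x; 0, 1] * A⁻¹ = _
    rw [hAinv]
    ext i j
    fin_cases i <;> fin_cases j <;>
      · simp [A, Matrix.mul_apply, Fin.sum_univ_two, Matrix.one_apply]
        field_simp
        try rw [hfesub]
        ring
  refine ⟨hM, ?_⟩
  have hM00 : M 0 0 = 1 + (x * (f e)⁻¹) * (-(f a' * f c')) := by rw [hM]; simp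
  have hM01 : M 0 1 = (x * (f e)⁻¹) * ((f a') ^ 2) := by rw [hM]; simp
  have hM10 : M 1 0 = (x * (f e)⁻¹) * (-((f c') ^ 2)) := by rw [hM]; simp
  have hM11 : M 1 1 = 1 + (x * (f e)⁻¹) * (f a' * f c') := by rw [hM]; simp
  constructor
  · rintro ⟨hall, z, hz⟩
    constructor
    · obtain ⟨y, hy⟩ := hall 0 1
      refine ⟨y * e, ?_⟩
      rw [map_mul, hy, hM01]
      field_simp
    · refine ⟨-(z * e), ?_⟩
      calc f (π ^ n * -(z * e)) = -(f (π ^ n * z) * f e) := by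
            rw [show π ^ n * -(z * e) = -(π ^ n * z * e) by ring, map_neg, map_mul]
        _ = (f c') ^ 2 * x := by rw [hz, hM10]; field_simp
  · rintro ⟨⟨ya, hya⟩, yc, hyc⟩
    obtain ⟨w, hw⟩ : ∃ y : O, f y = f a' * f c' * x := by
      apply sq_mem_aux O K
      refine ⟨ya * (π ^ n * yc), ?_⟩
      rw [map_mul, hya, hyc]
      ring
    constructor
    · simp only [Fin.forall_fin_two]
      refine ⟨⟨⟨1 - w * u', ?_⟩, ya * u', ?_⟩, ⟨-(π ^ n * yc * u'), ?_⟩, 1 + w * u', ?_⟩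
      · rw [map_sub, map_mul, map_one, hw, hM00, hinv]; ring
      · rw [map_mul, hya, hM01, hinv]; ring
      · rw [map_neg, map_mul, hyc, hM10, hinv]; ring
      · rw [map_add, map_mul, map_one, hw, hM11, hinv]; ring
    · refine ⟨-(yc * u'), ?_⟩
      calc f (π ^ n * -(yc * u')) = -(f (π ^ n * yc) * f u') := by
            rw [show π ^ n * -(yc * u') = -(π ^ n * yc * u') by ring, map_neg, map_mul]
        _ = M 1 0 := by rw [hyc, hM10, hinv]; ring
end

section
/- Let O be a discrete valuation ring with fraction field K and uniformizer π (so the maximal ideal of O is πO). Let a', b', c', d' ∈ O with ε := a'd' − b'c' a unit of O, let d ≥ 0 and n ≥ 0 be integers, and let α be a unit of O satisfying c'd'(α − 1) ∈ π^n O. Set M = [[a', b'·π^{−d}], [c'·π^{d}, d']], a matrix over K. Then M · diag(α, 1) · M⁻¹ = ε⁻¹ · [[a'd'α − b'c', a'b'(1 − α)·π^{−d}], [c'd'(α − 1)·π^{d}, a'd' − b'c'α]]; its two diagonal entries lie in O, its upper-right entry lies in π^{−d} O, its lower-left entry lies in π^{n+d} O, and its determinant equals α, a unit of O. -/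
/-- Let `O` be a DVR with fraction field `K` and uniformizer `π`.
Let `a', b', c', d' ∈ O` with `ε = a'd' − b'c'` a unit, `d, n ≥ 0`, and let `α ∈ O^×`
satisfy `c'd'(α − 1) ∈ π^n O`.  Set `M = [[a', b'π^(−d)], [c'π^d, d']]` over `K`.  Then
`M · diag(α,1) · M⁻¹ = ε⁻¹·[[a'd'α − b'c', a'b'(1 − α)π^(−d)], [c'd'(α − 1)π^d, a'd' − b'c'α]]`,
its diagonal entries lie in `O`, its upper-right entry lies in `π^(−d) O`, its lower-left
entry lies in `π^(n+d) O`, and its determinant equals `α`, a unit of `O`. -/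
theorem hilbert_cusp_local_congruence
    (O K : Type*) [CommRing O] [IsDomain O] [IsDiscreteValuationRing O]
    [Field K] [Algebra O K] [IsFractionRing O K]
    (π : O) (hπ : Irreducible π)
    (a' b' c' d' : O) (hε : IsUnit (a' * d' - b' * c'))
    (d n : ℕ) (α : Oˣ)
    (hα : ∃ y : O, c' * d' * ((α : O) - 1) = π ^ n * y) :
    let f : O →+* K := algebraMap O K
    let M : Matrix (Fin 2) (Fin 2) K :=
      !![f a', f b' * (f π) ^ (-(d : ℤ)); f c' * (f π) ^ (d : ℤ), f d']
    let N : Matrix (Fin 2) (Fin 2) K := M * !![f (α : O), 0; 0, 1] * M⁻¹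
    (N = (f (a' * d' - b' * c'))⁻¹ •
        !![f (a' * d' * (α : O) - b' * c'), f (a' * b' * (1 - (α : O))) * (f π) ^ (-(d : ℤ));
           f (c' * d' * ((α : O) - 1)) * (f π) ^ (d : ℤ), f (a' * d' - b' * c' * (α : O))]) ∧
    (∃ y : O, f y = N 0 0) ∧ (∃ y : O, f y = N 1 1) ∧
    (∃ y : O, f y * (f π) ^ (-(d : ℤ)) = N 0 1) ∧
    (∃ y : O, f (π ^ (n + d) * y) = N 1 0) ∧
    N.det = f (α : O) ∧ IsUnit (α : O) := by
  intro f M N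
  have hfinj : Function.Injective f := IsFractionRing.injective O K
  have hπ0 : f π ≠ 0 := fun h => hπ.ne_zero (hfinj (by simpa using h))
  have hp : (f π) ^ (d : ℤ) * (f π) ^ (-(d : ℤ)) = 1 := by
    rw [← zpow_add₀ hπ0]; simp
  have he : IsUnit (f (a' * d' - b' * c')) := hε.map f
  have he0 : f (a' * d' - b' * c') ≠ 0 := he.ne_zero
  have hdet : M.det = f (a' * d' - b' * c') := by
    have hzp : (f π) ^ (-(d:ℤ)) = ((f π) ^ d)⁻¹ := by rw [zpow_neg, zpow_natCast]
    have hzp' : (f π) ^ ((d:ℤ)) = (f π) ^ d := zpow_natCast _ _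
    simp only [M, Matrix.det_fin_two_of, map_sub, map_mul, hzp, hzp']
    field_simp
  have hMinv : M⁻¹ = (f (a' * d' - b' * c'))⁻¹ •
      !![f d', -(f b' * (f π) ^ (-(d : ℤ))); -(f c' * (f π) ^ (d : ℤ)), f a'] := by
    rw [Matrix.inv_def, hdet, Ring.inverse_eq_inv']
    congr 1
    simp [M, Matrix.adjugate_fin_two_of]
  have key : N = (f (a' * d' - b' * c'))⁻¹ •
      !![f (a' * d' * (α : O) - b' * c'), f (a' * b' * (1 - (α : O))) * (f π) ^ (-(d : ℤ));
         f (c' * d' * ((α : O) - 1)) * (f π) ^ (d : ℤ), f (a' * d' - b' * c' * (α : O))] := by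
    show M * !![f (α : O), 0; 0, 1] * M⁻¹ = _
    rw [hMinv, Matrix.mul_smul]
    congr 1
    ext i j
    fin_cases i <;> fin_cases j <;>
      simp only [M, Matrix.mul_apply, Fin.sum_univ_two, map_sub, map_mul, map_one,
        Matrix.cons_val', Matrix.cons_val_zero, Matrix.cons_val_one, Matrix.head_cons,
        Matrix.head_fin_const, Matrix.empty_val', Matrix.cons_val_fin_one,
        zpow_neg, zpow_natCast, Fin.isValue, Fin.zero_eta, Fin.mk_one, Matrix.of_apply] <;>
      field_simp <;> ring
  have hu : f ((hε.unit⁻¹ : Oˣ) : O) = (f (a' * d' - b' * c'))⁻¹ := by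
    apply eq_inv_of_mul_eq_one_left
    have h1 : ((hε.unit⁻¹ : Oˣ) : O) * (a' * d' - b' * c') = 1 := by
      have h2 := hε.unit.inv_mul
      rwa [hε.unit_spec] at h2
    rw [← map_mul, h1, map_one]
  refine ⟨key, ?_, ?_, ?_, ?_, ?_, α.isUnit⟩
  · exact ⟨(hε.unit⁻¹ : Oˣ) * (a' * d' * (α : O) - b' * c'), by
      rw [key]; simp [Matrix.smul_apply, map_mul, hu]⟩
  · exact ⟨(hε.unit⁻¹ : Oˣ) * (a' * d' - b' * c' * (α : O)), by
      rw [key]; simp [Matrix.smul_apply, map_mul, hu]⟩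
  · exact ⟨(hε.unit⁻¹ : Oˣ) * (a' * b' * (1 - (α : O))), by
      rw [key]; simp [Matrix.smul_apply, map_mul, hu]; ring⟩
  · obtain ⟨y0, hy0⟩ := hα
    refine ⟨(hε.unit⁻¹ : Oˣ) * y0, ?_⟩
    rw [key]
    simp [Matrix.smul_apply, hy0, map_mul, map_pow, hu, zpow_natCast, pow_add]
    ring
  · show (M * !![f (α : O), 0; 0, 1] * M⁻¹).det = f (α : O)
    rw [Matrix.det_mul, Matrix.det_mul, Matrix.det_nonsing_inv, hdet, Ring.inverse_eq_inv']
    have he0' : f a' * f d' - f b' * f c' ≠ 0 := by simpa [map_sub, map_mul] using he0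
    simp [Matrix.det_fin_two_of]
    rw [mul_right_comm, mul_inv_cancel₀ he0', one_mul]
end

section
/- For every adele x in the adele ring 𝔸_ℚ of ℚ there exists a unique rational number γ such that the component of x − γ at the archimedean place lies in the half-open interval [0, 1) and, for every prime p, the component of x − γ at p lies in ℤ_p. -/
open IsDedekindDomain IsDedekindDomain.HeightOneSpectrum

private lemma val_div' (v : HeightOneSpectrum ℤ) (n d : ℤ) (hd : d ∈ nonZeroDivisors ℤ) :
    v.valuation ℚ ((n : ℚ) / (d : ℚ)) = v.intValuation n / v.intValuation d := by
  rw [show (n:ℚ)/(d:ℚ) = IsLocalization.mk' ℚ n (⟨d, hd⟩ : nonZeroDivisors ℤ) by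
    rw [IsFractionRing.mk'_eq_div]; norm_num]
  exact valuation_of_mk' v

private lemma exists_gen' (v : HeightOneSpectrum ℤ) :
    ∃ p : ℕ, p.Prime ∧ v.asIdeal = Ideal.span {(p:ℤ)} := by
  obtain ⟨g, hg⟩ := IsPrincipalIdealRing.principal (v.asIdeal)
  rw [Ideal.submodule_span_eq] at hg
  have hg0 : g ≠ 0 := by
    rintro rfl; exact v.ne_bot (by rw [hg]; exact Ideal.span_singleton_eq_bot.mpr rfl)
  have hprime : Prime g := (Ideal.span_singleton_prime hg0).mp (hg ▸ v.isPrime)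
  refine ⟨g.natAbs, Int.prime_iff_natAbs_prime.mp hprime, ?_⟩
  rw [hg, Ideal.span_singleton_eq_span_singleton]
  exact (Int.associated_natAbs g)

private lemma int_val_eq_one' (v : HeightOneSpectrum ℤ) (n : ℤ) (h : n ∉ v.asIdeal) :
    v.intValuation n = 1 := by
  have h1 : v.intValuation n ≤ 1 := intValuation_le_one v n
  have h2 : ¬ v.intValuation n < 1 := by
    rw [intValuation_lt_one_iff_dvd, Ideal.dvd_span_singleton]
    exact h
  exact le_antisymm h1 (not_lt.mp h2)

private lemma exists_rat_close' (v : HeightOneSpectrum ℤ) (y : v.adicCompletion ℚ) :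
    ∃ q : ℚ, y - algebraMap ℚ (v.adicCompletion ℚ) q ∈ v.adicCompletionIntegers ℚ := by
  have hd : DenseRange (algebraMap ℚ (v.adicCompletion ℚ)) := by
    exact denseRange_algebraMap ℚ v
  have hU : {z : v.adicCompletion ℚ |
      Valued.v (z - y) < (1 : WithZero (Multiplicative ℤ))} ∈ nhds y := by
    rw [Valued.mem_nhds]; exact ⟨1, fun z hz => by simpa using hz⟩
  obtain ⟨z, hz, q, rfl⟩ := mem_closure_iff_nhds.mp (hd y) _ hU
  refine ⟨q, ?_⟩
  rw [mem_adicCompletionIntegers, ← Valuation.map_neg, neg_sub]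
  exact le_of_lt hz

private lemma principal_part' (v : HeightOneSpectrum ℤ) (q : ℚ) :
    ∃ r : ℚ, v.valuation ℚ (q - r) ≤ 1 ∧
      ∀ w : HeightOneSpectrum ℤ, w ≠ v → w.valuation ℚ r ≤ 1 := by
  obtain ⟨p, hp, hv⟩ := exists_gen' v
  set d : ℕ := q.den with hd
  set n : ℤ := q.num with hn
  have hd0 : d ≠ 0 := q.den_nz
  set k : ℕ := d.factorization p with hk
  set m : ℕ := d / p ^ k with hm
  have hdm : p ^ k * m = d := Nat.ordProj_mul_ordCompl_eq_self d p
  have hpm : ¬ p ∣ m := Nat.not_dvd_ordCompl hp hd0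
  have hm0 : m ≠ 0 := by rintro h; rw [h, mul_zero] at hdm; exact hd0 hdm.symm
  have hp0 : (p:ℤ) ≠ 0 := by exact_mod_cast hp.ne_zero
  have hcop : IsCoprime ((p:ℤ) ^ k) (m : ℤ) := by
    rw [Int.isCoprime_iff_gcd_eq_one, ← Nat.cast_pow, Int.gcd_natCast_natCast]
    exact Nat.Coprime.pow_left k ((Nat.Prime.coprime_iff_not_dvd hp).mpr hpm)
  obtain ⟨a, b, hab⟩ := hcop
  refine ⟨(n * b : ℤ) / ((p:ℤ) ^ k : ℤ), ?_, ?_⟩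
  · have key : q - ((n * b : ℤ) : ℚ) / (((p:ℤ) ^ k : ℤ) : ℚ) = ((n * a : ℤ) : ℚ) / ((m:ℤ) : ℚ) := by
      have hq : q = (n : ℚ) / ((d:ℤ) : ℚ) := by exact_mod_cast (Rat.num_div_den q).symm
      have habQ : (a:ℚ) * (p:ℚ) ^ k + (b:ℚ) * (m:ℚ) = 1 := by exact_mod_cast hab
      have hdmQ : ((p:ℚ)) ^ k * (m:ℚ) = ((d:ℤ):ℚ) := by exact_mod_cast hdm
      have hpk0 : ((p:ℚ)) ^ k ≠ 0 := pow_ne_zero _ (by exact_mod_cast hp.ne_zero)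
      have hm0' : (m:ℚ) ≠ 0 := by exact_mod_cast hm0
      rw [hq, ← hdmQ]
      push_cast
      field_simp
      linear_combination (-(n:ℚ)) * habQ
    have hmenz : (m:ℤ) ∈ nonZeroDivisors ℤ :=
      mem_nonZeroDivisors_of_ne_zero (by exact_mod_cast hm0)
    have hmnotmem : (m:ℤ) ∉ v.asIdeal := by
      rw [hv, Ideal.mem_span_singleton]
      intro hdvd
      exact hpm (by exact_mod_cast Int.natCast_dvd_natCast.mp hdvd)
    rw [key, val_div' v (n*a) (m:ℤ) hmenz, int_val_eq_one' v (m:ℤ) hmnotmem, div_one]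
    exact intValuation_le_one v _
  · intro w hw
    have hpknz : ((p:ℤ)^k) ∈ nonZeroDivisors ℤ :=
      mem_nonZeroDivisors_of_ne_zero (pow_ne_zero _ hp0)
    have hpnotmem : (p:ℤ) ∉ w.asIdeal := by
      intro hmem
      apply hw
      apply HeightOneSpectrum.ext
      refine (Ideal.IsMaximal.eq_of_le ?_ w.isPrime.ne_top ?_).symm
      · exact Ideal.IsPrime.isMaximal v.isPrime v.ne_bot
      · rw [hv, Ideal.span_singleton_le_iff_mem]; exact hmem
    rw [val_div' w (n*b) ((p:ℤ)^k) hpknz, map_pow, int_val_eq_one' w (p:ℤ) hpnotmem, one_pow,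
      div_one]
    exact intValuation_le_one w _

private lemma den_eq_one' (q : ℚ) (h : ∀ w : HeightOneSpectrum ℤ, w.valuation ℚ q ≤ 1) :
    q.den = 1 := by
  by_contra hne
  obtain ⟨p, hp, hdvd⟩ := Nat.exists_prime_and_dvd hne
  set v : HeightOneSpectrum ℤ :=
    { asIdeal := Ideal.span {(p : ℤ)}
      isPrime := (Ideal.span_singleton_prime (by exact_mod_cast hp.ne_zero)).mpr
        (Nat.prime_iff_prime_int.mp hp)
      ne_bot := by
        simpa [Ideal.span_singleton_eq_bot] using (by exact_mod_cast hp.ne_zero : (p:ℤ) ≠ 0) }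
    with hv
  have hq : q = (q.num : ℚ) / ((q.den:ℤ) : ℚ) := by exact_mod_cast (Rat.num_div_den q).symm
  have hdlt : v.intValuation (q.den:ℤ) < 1 := by
    rw [intValuation_lt_one_iff_dvd, Ideal.dvd_span_singleton]
    show ((q.den:ℤ)) ∈ Ideal.span {(p:ℤ)}
    rw [Ideal.mem_span_singleton]
    exact_mod_cast Int.natCast_dvd_natCast.mpr hdvd
  have hnum : v.intValuation q.num = 1 := by
    apply int_val_eq_one'
    show q.num ∉ Ideal.span {(p:ℤ)}
    rw [Ideal.mem_span_singleton]
    intro hdn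
    have hpd : p ∣ q.num.natAbs := by
      rw [Int.natCast_dvd] at hdn; exact hdn
    have hpg : p ∣ Nat.gcd q.num.natAbs q.den := Nat.dvd_gcd hpd hdvd
    rw [q.reduced] at hpg
    exact hp.one_lt.ne' (Nat.dvd_one.mp hpg)
  have hdnz : v.intValuation (q.den:ℤ) ≠ 0 :=
    intValuation_ne_zero v _ (by exact_mod_cast q.den_nz)
  have hval := h v
  rw [hq, val_div' v _ _ (mem_nonZeroDivisors_of_ne_zero (by exact_mod_cast q.den_nz)),
    hnum, one_div] at hval
  have hge : (1 : WithZero (Multiplicative ℤ)) ≤ v.intValuation (q.den:ℤ) := by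
    calc (1 : WithZero (Multiplicative ℤ))
        = v.intValuation (q.den:ℤ) * (v.intValuation (q.den:ℤ))⁻¹ := (mul_inv_cancel₀ hdnz).symm
      _ ≤ v.intValuation (q.den:ℤ) * 1 := mul_le_mul_right hval _
      _ = v.intValuation (q.den:ℤ) := mul_one _
  exact absurd hdlt (not_lt.mpr hge)

/-- For every adele `x` of `ℚ` (the adele ring being
`ℝ × 𝔸_{ℚ,f}` with `𝔸_{ℚ,f}` the finite adele ring of `ℤ ⊂ ℚ`) there exists a
unique rational number `γ` such that the archimedean component of `x − γ` lies
in `[0, 1)` and, for every finite place `v`, the component of `x − γ` at `v`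
lies in the ring of integers `ℤ_v`. -/
theorem adele_unique_representative (x : ℝ × FiniteAdeleRing ℤ ℚ) :
    ∃! γ : ℚ,
      (x.1 - (γ : ℝ)) ∈ Set.Ico (0 : ℝ) 1 ∧
      ∀ v : HeightOneSpectrum ℤ,
        (x.2 - algebraMap ℚ (FiniteAdeleRing ℤ ℚ) γ) v ∈ v.adicCompletionIntegers ℚ := by
  classical
  -- component evaluation
  have happly : ∀ (q : ℚ) (w : HeightOneSpectrum ℤ),
      (algebraMap ℚ (FiniteAdeleRing ℤ ℚ) q) w = algebraMap ℚ (w.adicCompletion ℚ) q :=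
    fun q w => rfl
  have hsub : ∀ (a b : FiniteAdeleRing ℤ ℚ) (w : HeightOneSpectrum ℤ),
      (a - b) w = a w - b w := fun a b w => rfl
  have hvalmem : ∀ (q : ℚ) (w : HeightOneSpectrum ℤ), w.valuation ℚ q ≤ 1 →
      algebraMap ℚ (w.adicCompletion ℚ) q ∈ w.adicCompletionIntegers ℚ := by
    intro q w hq
    rw [mem_adicCompletionIntegers]
    exact (valuedAdicCompletion_eq_valuation' (K := ℚ) w q).trans_le hq
  -- Step 1: clear finite denominators
  obtain ⟨q0, hq0⟩ : ∃ q0 : ℚ, ∀ w : HeightOneSpectrum ℤ,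
      x.2 w - algebraMap ℚ (w.adicCompletion ℚ) q0 ∈ w.adicCompletionIntegers ℚ := by
    have hfin : {v : HeightOneSpectrum ℤ |
        x.2 v ∉ v.adicCompletionIntegers ℚ}.Finite := Filter.eventually_cofinite.mp x.2.2
    set T : Finset (HeightOneSpectrum ℤ) := hfin.toFinset with hT
    choose qv hqv using fun v : HeightOneSpectrum ℤ => exists_rat_close' v (x.2 v)
    choose rv hrv1 hrv2 using fun v : HeightOneSpectrum ℤ => principal_part' v (qv v)
    refine ⟨∑ v ∈ T, rv v, fun w => ?_⟩
    have hmapsum : algebraMap ℚ (w.adicCompletion ℚ) (∑ v ∈ T, rv v)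
        = ∑ v ∈ T, algebraMap ℚ (w.adicCompletion ℚ) (rv v) := map_sum (algebraMap ℚ (w.adicCompletion ℚ)) _ _
    rw [hmapsum]
    by_cases hwT : w ∈ T
    · rw [← Finset.add_sum_erase T _ hwT]
      have h1 : x.2 w - algebraMap ℚ (w.adicCompletion ℚ) (qv w) ∈ w.adicCompletionIntegers ℚ :=
        hqv w
      have h2 : algebraMap ℚ (w.adicCompletion ℚ) (qv w - rv w) ∈ w.adicCompletionIntegers ℚ :=
        hvalmem _ _ (hrv1 w)
      have h3 : ∑ v ∈ T.erase w, algebraMap ℚ (w.adicCompletion ℚ) (rv v)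
          ∈ w.adicCompletionIntegers ℚ := by
        apply Subring.sum_mem
        intro v hvmem
        exact hvalmem _ _ (hrv2 v w (fun hc => (Finset.mem_erase.mp hvmem).1 (hc ▸ rfl)))
      have := sub_mem (add_mem h1 h2) h3
      rw [RingHom.map_sub] at this
      convert this using 1
      ring
    · have h1 : x.2 w ∈ w.adicCompletionIntegers ℚ := by
        by_contra hc
        exact hwT (by rw [hT, Set.Finite.mem_toFinset]; exact hc)
      have h3 : ∑ v ∈ T, algebraMap ℚ (w.adicCompletion ℚ) (rv v)
          ∈ w.adicCompletionIntegers ℚ := by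
        apply Subring.sum_mem
        intro v hvmem
        refine hvalmem _ _ (hrv2 v w fun hc => ?_)
        subst hc; exact hwT hvmem
      exact sub_mem h1 h3
  -- Step 2: adjust by an integer for the archimedean place
  set N : ℤ := ⌊x.1 - (q0 : ℝ)⌋ with hN
  set γ : ℚ := q0 + N with hγ
  have hints : ∀ (z : ℤ) (w : HeightOneSpectrum ℤ), w.valuation ℚ ((z : ℚ)) ≤ 1 := by
    intro z w
    have := valuation_le_one w (K := ℚ) z
    exact this
  have hγfin : ∀ w : HeightOneSpectrum ℤ,
      (x.2 - algebraMap ℚ (FiniteAdeleRing ℤ ℚ) γ) w ∈ w.adicCompletionIntegers ℚ := by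
    intro w
    rw [hsub, happly, hγ, RingHom.map_add]
    have := sub_mem (hq0 w) (hvalmem (N:ℚ) w (hints N w))
    convert this using 1
    ring
  refine ⟨γ, ⟨?_, hγfin⟩, ?_⟩
  · have : x.1 - (γ : ℝ) = Int.fract (x.1 - (q0:ℝ)) := by
      rw [hγ, Int.fract, hN]
      push_cast
      ring
    rw [this]
    exact ⟨Int.fract_nonneg _, Int.fract_lt_one _⟩
  · rintro γ' ⟨hIco', hfin'⟩
    have hIco : x.1 - (γ : ℝ) ∈ Set.Ico (0:ℝ) 1 := by
      have : x.1 - (γ : ℝ) = Int.fract (x.1 - (q0:ℝ)) := by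
        rw [hγ, Int.fract, hN]; push_cast; ring
      rw [this]
      exact ⟨Int.fract_nonneg _, Int.fract_lt_one _⟩
    -- the difference has valuation ≤ 1 everywhere
    set δ : ℚ := γ' - γ with hδ
    have hδval : ∀ w : HeightOneSpectrum ℤ, w.valuation ℚ δ ≤ 1 := by
      intro w
      have h1 := hfin' w
      have h2 := hγfin w
      have := sub_mem h2 h1
      rw [hsub, hsub, happly, happly] at this
      have heq : x.2 w - algebraMap ℚ (w.adicCompletion ℚ) γ -
          (x.2 w - algebraMap ℚ (w.adicCompletion ℚ) γ') = algebraMap ℚ (w.adicCompletion ℚ) δ := by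
        rw [hδ, RingHom.map_sub]; ring
      rw [heq, mem_adicCompletionIntegers] at this
      exact le_of_eq_of_le (valuedAdicCompletion_eq_valuation' (K := ℚ) w δ).symm this
    have hden : δ.den = 1 := den_eq_one' δ hδval
    have hδint : ∃ z : ℤ, δ = (z : ℚ) := ⟨δ.num, by rw [← Rat.num_div_den δ, hden]; simp⟩
    obtain ⟨z, hz⟩ := hδint
    have habs : |(δ : ℝ)| < 1 := by
      have h1 := hIco'.1
      have h2 := hIco'.2
      have h3 := hIco.1
      have h4 := hIco.2
      have : (δ : ℝ) = (x.1 - (γ:ℝ)) - (x.1 - (γ':ℝ)) := by rw [hδ]; push_cast; ring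
      rw [this, abs_lt]
      constructor <;> linarith
    have hzabs : |z| < 1 := by
      have h' : ((|z| : ℤ) : ℝ) < 1 := by rwa [hz, Rat.cast_intCast, ← Int.cast_abs] at habs
      exact_mod_cast h'
    have hz0 : z = 0 := by
      rcases abs_lt.mp hzabs with ⟨h1, h2⟩
      omega
    have : δ = 0 := by rw [hz, hz0]; simp
    have := sub_eq_zero.mp (hδ ▸ this)
    exact this
end

section
/- For every idele x in 𝔸_ℚ^×, the group of units of the adele ring of ℚ, there exist a unique γ ∈ ℚ^×, a unique real number r > 0, and a unique family (u_p)_p with u_p ∈ ℤ_p^× for every prime p, such that x = γ · ι_∞(r) · ι_f(u), where ι_∞(r) denotes the idele whose component at the archimedean place is r and whose component at every prime is 1, and ι_f(u) denotes the idele whose component at the archimedean place is 1 and whose component at each prime p is u_p. -/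
open IsDedekindDomain


open IsDedekindDomain.HeightOneSpectrum Multiplicative in
private lemma zm0_eq_one {a b : WithZero (Multiplicative ℤ)} (ha : a ≤ 1) (hb : b ≤ 1) (hab : a * b = 1) : a = 1 := by
  refine le_antisymm ha ?_
  calc (1:WithZero (Multiplicative ℤ)) = a * b := hab.symm
    _ ≤ a * 1 := mul_le_mul_right hb a
    _ = a := mul_one a

open IsDedekindDomain.HeightOneSpectrum in
private lemma unit_val_one (v : HeightOneSpectrum ℤ) (w : (v.adicCompletionIntegers ℚ)ˣ) :
    Valued.v (((w : v.adicCompletionIntegers ℚ) : v.adicCompletion ℚ)) = 1 := by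
  have h : ((w : v.adicCompletionIntegers ℚ) : v.adicCompletion ℚ) *
      ((↑w⁻¹ : v.adicCompletionIntegers ℚ) : v.adicCompletion ℚ) = 1 := by
    have := congrArg (fun t : v.adicCompletionIntegers ℚ => (t : v.adicCompletion ℚ)) w.mul_inv
    push_cast at this; exact this
  have h1 := (w : v.adicCompletionIntegers ℚ).2
  have h2 := (↑w⁻¹ : v.adicCompletionIntegers ℚ).2
  rw [mem_adicCompletionIntegers] at h1 h2
  exact zm0_eq_one h1 h2 (by rw [← map_mul, h, map_one])

open IsDedekindDomain.HeightOneSpectrum in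
private lemma unit_of_val_one (v : HeightOneSpectrum ℤ) (t : v.adicCompletion ℚ)
    (h : Valued.v t = 1) :
    ∃ w : (v.adicCompletionIntegers ℚ)ˣ,
      ((w : v.adicCompletionIntegers ℚ) : v.adicCompletion ℚ) = t := by
  have ht : t ≠ 0 := by intro h0; rw [h0, map_zero] at h; exact zero_ne_one h
  have h1 : t ∈ v.adicCompletionIntegers ℚ := (mem_adicCompletionIntegers ℤ ℚ v).2 h.le
  have h2 : t⁻¹ ∈ v.adicCompletionIntegers ℚ := by
    rw [mem_adicCompletionIntegers, map_inv₀, h]; norm_num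
  refine ⟨⟨⟨t, h1⟩, ⟨t⁻¹, h2⟩, ?_, ?_⟩, rfl⟩ <;>
    · apply Subtype.ext; simp [mul_inv_cancel₀ ht, inv_mul_cancel₀ ht]

open IsDedekindDomain.HeightOneSpectrum in
private lemma exists_pos_gen (v : HeightOneSpectrum ℤ) :
    ∃ p : ℤ, 0 < p ∧ v.asIdeal = Ideal.span {p} := by
  obtain ⟨a, ha⟩ := (IsPrincipalIdealRing.principal v.asIdeal).principal
  rcases le_or_gt a 0 with h | h
  · refine ⟨-a, ?_, ?_⟩
    · rcases h.lt_or_eq with h | h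
      · omega
      · exact absurd (by rw [ha, h]; simp) v.ne_bot
    · rw [ha]; exact (Ideal.span_singleton_neg a).symm
  · exact ⟨a, h, ha⟩

open IsDedekindDomain.HeightOneSpectrum in
private lemma intVal_eq_one_of_ne {v w : HeightOneSpectrum ℤ} (hvw : v ≠ w) {p : ℤ}
    (hp : w.asIdeal = Ideal.span {p}) : v.intValuation p = 1 := by
  refine le_antisymm (v.intValuation_le_one p) ?_
  by_contra hlt
  rw [not_le] at hlt
  have h2 : v.intValuationDef p < 1 := hlt
  rw [← intValuation_apply, v.intValuation_lt_one_iff_dvd, ← hp, Ideal.dvd_iff_le] at h2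
  exact hvw (HeightOneSpectrum.ext ((HeightOneSpectrum.isMaximal w).eq_of_le
    (HeightOneSpectrum.isMaximal v).ne_top h2).symm)

open IsDedekindDomain.HeightOneSpectrum in
private lemma val_num_den (v : HeightOneSpectrum ℤ) (q : ℚ) :
    v.valuation ℚ (q:ℚ) * v.intValuation (q.den : ℤ) = v.intValuation q.num := by
  rw [← valuation_of_algebraMap (K := ℚ), ← valuation_of_algebraMap (K := ℚ), ← map_mul]
  congr 1
  push_cast
  rw [mul_comm, Rat.den_mul_eq_num]
  simp

open IsDedekindDomain.HeightOneSpectrum in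
private lemma heightOneSpectrum_of_prime {p : ℕ} (hp : p.Prime) :
    ∃ v : HeightOneSpectrum ℤ, v.asIdeal = Ideal.span {(p : ℤ)} := by
  have hp0 : (p : ℤ) ≠ 0 := by exact_mod_cast hp.ne_zero
  refine ⟨⟨Ideal.span {(p:ℤ)}, ?_, ?_⟩, rfl⟩
  · rw [Ideal.span_singleton_prime hp0]
    exact Nat.prime_iff_prime_int.mp hp
  · simpa using hp0

open IsDedekindDomain.HeightOneSpectrum in
private lemma rat_eq_one_of_val_one {q : ℚ} (hq : 0 < q)
    (h : ∀ v : HeightOneSpectrum ℤ, v.valuation ℚ (q:ℚ) = 1) : q = 1 := by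
  have hval : ∀ v : HeightOneSpectrum ℤ, v.intValuation ((q.den : ℤ)) = v.intValuation q.num := by
    intro v
    rw [← val_num_den v q, h v, one_mul]
  have key : ∀ p : ℕ, p.Prime → ¬ (p ∣ q.den) := by
    intro p hp hdvd
    obtain ⟨v, hv⟩ := heightOneSpectrum_of_prime hp
    have hden : v.intValuationDef ((q.den:ℤ)) < 1 := by
      rw [← intValuation_apply, v.intValuation_lt_one_iff_dvd, hv, span_singleton_dvd_span_singleton_iff_dvd]
      exact_mod_cast hdvd
    have hnum : v.intValuationDef q.num < 1 := by
      rw [show v.intValuationDef q.num = v.intValuation q.num from rfl, ← hval v]; exact hden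
    rw [← intValuation_apply, v.intValuation_lt_one_iff_dvd, hv, span_singleton_dvd_span_singleton_iff_dvd] at hnum
    have : p ∣ q.num.natAbs := by
      have := Int.natAbs_dvd_natAbs.mpr hnum
      simpa using this
    exact hp.one_lt.ne' (Nat.eq_one_of_dvd_coprimes q.reduced this hdvd)
  have keyn : ∀ p : ℕ, p.Prime → ¬ (p ∣ q.num.natAbs) := by
    intro p hp hdvd
    obtain ⟨v, hv⟩ := heightOneSpectrum_of_prime hp
    have hnum : v.intValuationDef q.num < 1 := by
      rw [← intValuation_apply, v.intValuation_lt_one_iff_dvd, hv, span_singleton_dvd_span_singleton_iff_dvd]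
      exact dvd_trans (Int.natCast_dvd_natCast.mpr hdvd) (Int.natAbs_dvd.mpr dvd_rfl)
    have hden : v.intValuationDef ((q.den:ℤ)) < 1 := by
      rw [show v.intValuationDef ((q.den:ℤ)) = v.intValuation ((q.den:ℤ)) from rfl, hval v]
      exact hnum
    rw [← intValuation_apply, v.intValuation_lt_one_iff_dvd, hv, span_singleton_dvd_span_singleton_iff_dvd] at hden
    exact key p hp (by exact_mod_cast hden)
  have hden1 : q.den = 1 := by
    by_contra hne
    obtain ⟨p, hp, hdvd⟩ := Nat.exists_prime_and_dvd hne
    exact key p hp hdvd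
  have hnum1 : q.num.natAbs = 1 := by
    by_contra hne
    obtain ⟨p, hp, hdvd⟩ := Nat.exists_prime_and_dvd hne
    exact keyn p hp hdvd
  have hnpos : 0 < q.num := Rat.num_pos.mpr hq
  have : q.num = 1 := by omega
  have hq' : q = (q.num : ℚ) / (q.den : ℚ) := (Rat.num_div_den q).symm
  rw [hq', this, hden1]
  norm_num

open IsDedekindDomain.HeightOneSpectrum Multiplicative in
private lemma val_algebraMap' (v : HeightOneSpectrum ℤ) (q : ℚ) :
    Valued.v (algebraMap ℚ (v.adicCompletion ℚ) q) = v.valuation ℚ q := by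
  rw [algebraMap_adicCompletion]; exact valuedAdicCompletion_eq_valuation' v q

open IsDedekindDomain.HeightOneSpectrum Multiplicative

/-- For every idele `x ∈ 𝔸_ℚ^×` (units of the adele ring
`ℝ × 𝔸_{ℚ,f}`) there exist a unique `γ ∈ ℚ^×`, a unique real `r > 0`, and a
unique family `u = (u_v)` of local units (an element of the finite adele ring
each of whose components is a unit of the local ring of integers) with
`x = γ · ι_∞(r) · ι_f(u)`, where `ι_∞(r) = (r, 1)` and `ι_f(u) = (1, u)`. -/
theorem idele_decomposition (x : (ℝ × FiniteAdeleRing ℤ ℚ)ˣ) :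
    ∃! gru : ℚˣ × ℝ × FiniteAdeleRing ℤ ℚ,
      0 < gru.2.1 ∧
      (∀ v : HeightOneSpectrum ℤ,
        ∃ w : (v.adicCompletionIntegers ℚ)ˣ,
          ((w : v.adicCompletionIntegers ℚ) : v.adicCompletion ℚ) = gru.2.2 v) ∧
      (x : ℝ × FiniteAdeleRing ℤ ℚ) =
        (((gru.1 : ℚ) : ℝ), algebraMap ℚ (FiniteAdeleRing ℤ ℚ) (gru.1 : ℚ)) *
          (gru.2.1, 1) * (1, gru.2.2) := by
  obtain ⟨⟨x1, X2⟩, ⟨y1, Y2⟩, hxy, hyx⟩ := x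
  have hxy1 : x1 * y1 = 1 := congrArg Prod.fst hxy
  have hxy2 : X2 * Y2 = 1 := congrArg Prod.snd hxy
  have hx1 : x1 ≠ 0 := left_ne_zero_of_mul_eq_one hxy1
  have hvv : ∀ v : HeightOneSpectrum ℤ, X2 v * Y2 v = 1 :=
    fun v => congrFun (congrArg Subtype.val hxy2) v
  have hmulv : ∀ v : HeightOneSpectrum ℤ, Valued.v (X2 v) * Valued.v (Y2 v) = 1 :=
    fun v => by rw [← map_mul, hvv v, map_one]
  have hne : ∀ v : HeightOneSpectrum ℤ, Valued.v (X2 v) ≠ 0 :=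
    fun v => left_ne_zero_of_mul_eq_one (hmulv v)
  have hfinX : {v : HeightOneSpectrum ℤ | X2 v ∉ v.adicCompletionIntegers ℚ}.Finite :=
    Filter.eventually_cofinite.mp X2.2
  have hfinY : {v : HeightOneSpectrum ℤ | Y2 v ∉ v.adicCompletionIntegers ℚ}.Finite :=
    Filter.eventually_cofinite.mp Y2.2
  have hS : {v : HeightOneSpectrum ℤ | Valued.v (X2 v) ≠ 1}.Finite := by
    refine (hfinX.union hfinY).subset fun v hv => ?_
    rw [Set.mem_union, Set.mem_setOf_eq, Set.mem_setOf_eq]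
    by_contra hc
    push_neg at hc
    obtain ⟨h1, h2⟩ := hc
    rw [mem_adicCompletionIntegers] at h1 h2
    exact hv (zm0_eq_one h1 h2 (hmulv v))
  set m : HeightOneSpectrum ℤ → ℤ := fun v => toAdd (WithZero.unzero (hne v)) with hm_def
  have hm : ∀ v, Valued.v (X2 v) = ((ofAdd (m v) : Multiplicative ℤ) : WithZero (Multiplicative ℤ)) := fun v => by
    rw [hm_def, ofAdd_toAdd, WithZero.coe_unzero]
  choose g hgpos hgspan using exists_pos_gen
  set T := hS.toFinset with hT_def
  set γ₀ : ℚ := ∏ v ∈ T, (g v : ℚ) ^ (-(m v)) with hγ₀_def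
  have hγ₀pos : 0 < γ₀ :=
    Finset.prod_pos fun v _ => zpow_pos (by exact_mod_cast hgpos v) _
  have hval_g : ∀ v w : HeightOneSpectrum ℤ, v ≠ w → w.valuation ℚ ((g v : ℚ)) = 1 := by
    intro v w hvw
    rw [show ((g v : ℚ)) = algebraMap ℤ ℚ (g v) by simp, valuation_of_algebraMap]
    exact intVal_eq_one_of_ne (Ne.symm hvw) (hgspan v)
  have hγ₀val : ∀ w : HeightOneSpectrum ℤ, w.valuation ℚ (γ₀ : ℚ) = Valued.v (X2 w) := by
    intro w
    have hmapped : w.valuation ℚ (γ₀ : ℚ) = ∏ v ∈ T, (w.valuation ℚ ((g v : ℚ))) ^ (-(m v)) := by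
      rw [hγ₀_def, map_prod]
      exact Finset.prod_congr rfl fun v _ => map_zpow₀ (w.valuation ℚ) _ _
    by_cases hw : w ∈ T
    · rw [hmapped, Finset.prod_eq_single_of_mem w hw
        (fun v _ hvw => by rw [hval_g v w hvw]; exact one_zpow _)]
      rw [show ((g w : ℚ)) = algebraMap ℤ ℚ (g w) by simp, valuation_of_algebraMap,
        intValuation_singleton _ (hgpos w).ne' (hgspan w), hm w]
      show WithZero.exp (-1 : ℤ) ^ (-(m w)) = WithZero.exp (m w)
      rw [← WithZero.exp_zsmul]
      norm_num
    · rw [hmapped, Finset.prod_eq_one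
        (fun v hvT => by rw [hval_g v w (fun h => hw (h ▸ hvT))]; exact one_zpow _)]
      have hw' : ¬ Valued.v (X2 w) ≠ 1 := fun h => hw (hS.mem_toFinset.mpr h)
      rw [not_not.mp hw']
  set γq : ℚ := if 0 < x1 then γ₀ else -γ₀ with hγq_def
  have hγq0 : γq ≠ 0 := by
    rw [hγq_def]; split_ifs
    · exact hγ₀pos.ne'
    · exact (neg_lt_zero.mpr hγ₀pos).ne
  have hγqval : ∀ w : HeightOneSpectrum ℤ, w.valuation ℚ (γq : ℚ) = Valued.v (X2 w) := by
    intro w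
    rw [hγq_def]; split_ifs
    · exact hγ₀val w
    · rw [Valuation.map_neg]; exact hγ₀val w
  have hγqR : ((γq : ℚ) : ℝ) ≠ 0 := by exact_mod_cast hγq0
  set r : ℝ := x1 / (γq : ℝ) with hr_def
  have hrpos : 0 < r := by
    rcases hx1.lt_or_gt with hneg | hpos
    · rw [hr_def, hγq_def, if_neg (not_lt.mpr hneg.le)]
      exact div_pos_of_neg_of_neg hneg (by exact_mod_cast neg_lt_zero.mpr hγ₀pos)
    · rw [hr_def, hγq_def, if_pos hpos]
      exact div_pos hpos (by exact_mod_cast hγ₀pos)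
  set u : FiniteAdeleRing ℤ ℚ := algebraMap ℚ (FiniteAdeleRing ℤ ℚ) γq⁻¹ * X2 with hu_def
  have huval : ∀ v : HeightOneSpectrum ℤ, Valued.v (u v) = 1 := by
    intro v
    have h : u v = algebraMap ℚ (v.adicCompletion ℚ) γq⁻¹ * X2 v := rfl
    rw [h, map_mul, val_algebraMap', map_inv₀, hγqval v, inv_mul_cancel₀ (hne v)]
  have main_eq : ((x1, X2) : ℝ × FiniteAdeleRing ℤ ℚ) =
      (((γq : ℚ) : ℝ), algebraMap ℚ (FiniteAdeleRing ℤ ℚ) γq) * (r, 1) * (1, u) := by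
    have h1 : x1 = ((γq : ℚ) : ℝ) * r * 1 := by
      rw [mul_one, hr_def]; field_simp
    have h2 : X2 = algebraMap ℚ (FiniteAdeleRing ℤ ℚ) γq * 1 * u := by
      rw [mul_one, hu_def, ← mul_assoc, ← map_mul, mul_inv_cancel₀ hγq0, map_one, one_mul]
    exact Prod.ext h1 h2
  refine ⟨(Units.mk0 γq hγq0, r, u), ⟨hrpos, fun v => unit_of_val_one v (u v) (huval v),
    main_eq⟩, ?_⟩
  rintro ⟨γ₁, r₁, u₁⟩ ⟨hr₁pos, hu₁, heq₁⟩
  have hrhs := heq₁.symm.trans main_eq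
  have e1 := congrArg Prod.fst hrhs
  have e2 := congrArg Prod.snd hrhs
  simp only [Prod.fst_mul, Prod.snd_mul, mul_one, one_mul] at e1 e2
  have hu₁val : ∀ v : HeightOneSpectrum ℤ, Valued.v (u₁ v) = 1 := fun v => by
    obtain ⟨w, hw⟩ := hu₁ v; rw [← hw]; exact unit_val_one v w
  have hvals : ∀ v : HeightOneSpectrum ℤ, v.valuation ℚ ((γ₁ : ℚ)) = v.valuation ℚ (γq : ℚ) := by
    intro v
    have h : algebraMap ℚ (v.adicCompletion ℚ) (γ₁ : ℚ) * u₁ v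
        = algebraMap ℚ (v.adicCompletion ℚ) γq * u v := congrFun (congrArg Subtype.val e2) v
    have h' := congrArg Valued.v h
    rwa [map_mul, map_mul, hu₁val v, huval v, mul_one, mul_one, val_algebraMap',
      val_algebraMap'] at h'
  have hdivR : ((γ₁ : ℚ) : ℝ) / ((γq : ℚ) : ℝ) = r / r₁ := by
    rw [div_eq_div_iff hγqR hr₁pos.ne']
    linarith [e1]
  have hqpos : 0 < (γ₁ : ℚ) / γq := by
    have : ((((γ₁ : ℚ) / γq) : ℚ) : ℝ) = r / r₁ := by push_cast; exact hdivR
    rw [← Rat.cast_pos (K := ℝ), this]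
    exact div_pos hrpos hr₁pos
  have hq1 : (γ₁ : ℚ) / γq = 1 := by
    refine rat_eq_one_of_val_one hqpos fun v => ?_
    rw [map_div₀, hvals v, div_self]
    exact (Valuation.ne_zero_iff _).mpr hγq0
  have hγeq : (γ₁ : ℚ) = γq := by
    rwa [div_eq_one_iff_eq hγq0] at hq1
  have hγ₁ : γ₁ = Units.mk0 γq hγq0 := Units.ext hγeq
  have hr₁ : r₁ = r := by
    apply mul_left_cancel₀ hγqR
    rw [← e1, hγeq]
  have hu₁u : u₁ = u := by
    have hU : IsUnit (algebraMap ℚ (FiniteAdeleRing ℤ ℚ) γq) :=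
      (IsUnit.mk0 γq hγq0).map (algebraMap ℚ (FiniteAdeleRing ℤ ℚ))
    apply hU.mul_left_cancel
    rw [← e2, hγeq]
  exact Prod.ext hγ₁ (Prod.ext hr₁ hu₁u)
end
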